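/- For a decorated permutation σ ∈ S̃_n with σ ≠ θ: |DEX(σ)| = des(σ) if σ(1) ∈ {0, 1}, and |DEX(σ)| = des(σ) − 1 if σ(1) > 1. -/

import Mathlib

open scoped Classical

/-- A decorated permutation of `[n]`, encoded as its one-line word
`w : Fin n → Fin (n+1)` (position `i` is the 1-based position `i+1`, value `0`
means no value): the nonzero entries are distinct, and every nonzero value is
(the 1-based name of) a position carrying a nonzero entry.  Hence the nonzero
entries form a permutation of their set of positions. -/
def IsDecorated {n : ℕ} (w : Fin n → Fin (n + 1)) : Prop :=
  (∀ i j, (w i : ℕ) ≠ 0 → w i = w j → i = j) ∧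
  (∀ i, (w i : ℕ) ≠ 0 → ∃ j : Fin n, (w j : ℕ) ≠ 0 ∧ (w i : ℕ) = (j : ℕ) + 1)

/-- The all-zero decorated permutation `θ`. -/
def isTheta {n : ℕ} (w : Fin n → Fin (n + 1)) : Prop := ∀ i, (w i : ℕ) = 0

/-- The number of excedances of a decorated permutation (positions `i` with
`w_i > i`, in 1-based terms). -/
def dExc {n : ℕ} (w : Fin n → Fin (n + 1)) : ℕ :=
  (Finset.univ.filter (fun i : Fin n => (i : ℕ) + 1 < (w i : ℕ))).card

/-- `exc(w) + 1`, where `exc(θ) = -1`. -/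
noncomputable def dExcP1 {n : ℕ} (w : Fin n → Fin (n + 1)) : ℕ :=
  if isTheta w then 0 else dExc w + 1

/-- The number of descents of the one-line word of a decorated permutation,
with respect to the order `0 < 1 < ⋯ < n`. -/
def dDes {n : ℕ} (w : Fin n → Fin (n + 1)) : ℕ :=
  ((Finset.range n).filter (fun i =>
    ∃ h : i + 1 < n, (w ⟨i + 1, h⟩ : ℕ) < (w ⟨i, Nat.lt_of_succ_lt h⟩ : ℕ))).card

/-- The major index of the one-line word of a decorated permutation. -/
def dMaj {n : ℕ} (w : Fin n → Fin (n + 1)) : ℕ :=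
  ∑ i ∈ (Finset.range n).filter (fun i =>
      ∃ h : i + 1 < n, (w ⟨i + 1, h⟩ : ℕ) < (w ⟨i, Nat.lt_of_succ_lt h⟩ : ℕ)), (i + 1)

/-- The letter at position `i` of the barred word `σ̄` of a decorated
permutation, over the alphabet `1̄ < ⋯ < n̄ < 0 < 1 < ⋯ < n` encoded in `ℤ`. -/
def dBarred {n : ℕ} (w : Fin n → Fin (n + 1)) (i : Fin n) : ℤ :=
  if (i : ℕ) + 1 < (w i : ℕ) then ((w i : ℕ) : ℤ) - (n + 1) else ((w i : ℕ) : ℤ)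

/-- `DEX(σ)` for a decorated permutation: the descent set of the barred word,
as 0-based indices. -/
def dDEXset {n : ℕ} (w : Fin n → Fin (n + 1)) : Finset ℕ :=
  (Finset.range n).filter (fun i =>
    ∃ h : i + 1 < n, dBarred w ⟨i + 1, h⟩ < dBarred w ⟨i, Nat.lt_of_succ_lt h⟩)

/-- For a decorated permutation `σ ∈ S̃_n` with `σ ≠ θ`:
`|DEX(σ)| = des(σ)` if `σ(1) ∈ {0,1}`, and `|DEX(σ)| = des(σ) - 1` if
`σ(1) > 1`. -/
theorem card_dDEX (n : ℕ) (hn : 0 < n) (w : Fin n → Fin (n + 1))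
    (hw : IsDecorated w) (hθ : ¬ isTheta w) :
    ((w ⟨0, hn⟩ : ℕ) ≤ 1 → (dDEXset w).card = dDes w) ∧
    (1 < (w ⟨0, hn⟩ : ℕ) → ((dDEXset w).card : ℤ) = (dDes w : ℤ) - 1) := by
  obtain ⟨hinj, -⟩ := hw
  set X : ℕ → ℤ := fun i => if h : i < n then (if i + 1 < (w ⟨i, h⟩ : ℕ) then 1 else 0) else 0
    with hXdef
  have key : ∀ i ∈ Finset.range n,
      ((if (∃ h : i + 1 < n, dBarred w ⟨i + 1, h⟩ < dBarred w ⟨i, Nat.lt_of_succ_lt h⟩)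
          then (1:ℤ) else 0)
       - (if (∃ h : i + 1 < n, (w ⟨i + 1, h⟩ : ℕ) < (w ⟨i, Nat.lt_of_succ_lt h⟩ : ℕ))
          then (1:ℤ) else 0))
      = X (i+1) - X i := by
    intro i hi
    rw [Finset.mem_range] at hi
    rcases lt_or_ge (i+1) n with h1 | h1
    · have hia : i < n := Nat.lt_of_succ_lt h1
      have e1 : (∃ h : i + 1 < n, dBarred w ⟨i + 1, h⟩ < dBarred w ⟨i, Nat.lt_of_succ_lt h⟩)
          ↔ dBarred w ⟨i+1, h1⟩ < dBarred w ⟨i, hia⟩ := ⟨fun ⟨_, p⟩ => p, fun p => ⟨h1, p⟩⟩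
      have e2 : (∃ h : i + 1 < n, (w ⟨i + 1, h⟩ : ℕ) < (w ⟨i, Nat.lt_of_succ_lt h⟩ : ℕ))
          ↔ (w ⟨i+1, h1⟩ : ℕ) < (w ⟨i, hia⟩ : ℕ) := ⟨fun ⟨_, p⟩ => p, fun p => ⟨h1, p⟩⟩
      have hXi : X i = if i + 1 < (w ⟨i, hia⟩ : ℕ) then 1 else 0 := by
        rw [hXdef]; exact dif_pos hia
      have hXi1 : X (i+1) = if i + 1 + 1 < (w ⟨i+1, h1⟩ : ℕ) then 1 else 0 := by
        rw [hXdef]; exact dif_pos h1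
      set a : ℕ := (w ⟨i, hia⟩ : ℕ) with ha
      set c : ℕ := (w ⟨i+1, h1⟩ : ℕ) with hc
      have haLt : a < n + 1 := (w ⟨i, hia⟩).isLt
      have hcLt : c < n + 1 := (w ⟨i+1, h1⟩).isLt
      have hb1 : dBarred w ⟨i, hia⟩ = if i + 1 < a then (a : ℤ) - (n + 1) else (a : ℤ) := by
        simp [dBarred]; rfl
      have hb2 : dBarred w ⟨i+1, h1⟩ = if i + 1 + 1 < c then (c : ℤ) - (n + 1) else (c : ℤ) := by
        simp [dBarred]; rfl
      simp only [e1, e2]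
      rw [hXi, hXi1, hb1, hb2]
      by_cases hea : i + 1 < a <;> by_cases hec : i + 1 + 1 < c
      · rw [if_pos hea, if_pos hec, if_pos hea, if_pos hec]
        split_ifs with p q q <;> push_cast at * <;> omega
      · -- i excedance, i+1 not: need c < a
        have hcne : c ≠ a := by
          intro hca
          have hane : a ≠ 0 := by omega
          have hwe : w ⟨i+1, h1⟩ = w ⟨i, hia⟩ := Fin.ext (by simpa [← ha, ← hc] using hca)
          have := hinj ⟨i+1, h1⟩ ⟨i, hia⟩ (by simpa [← hc, hca] using hane) hwe
          simp [Fin.mk.injEq] at this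
        have hca : c < a := by omega
        rw [if_pos hea, if_neg hec, if_pos hea, if_neg hec, if_pos hca,
          if_neg (by push_cast; omega : ¬ ((c:ℤ) < (a:ℤ) - (n+1)))]
      · rw [if_neg hea, if_pos hec, if_neg hea, if_pos hec,
          if_pos (by push_cast; omega : ((c:ℤ) - (n+1) < (a:ℤ))),
          if_neg (by omega : ¬ (c < a))]
      · rw [if_neg hea, if_neg hec, if_neg hea, if_neg hec]
        split_ifs with p q q <;> push_cast at * <;> omega
    · have hne1 : ¬ (∃ h : i + 1 < n, dBarred w ⟨i + 1, h⟩ < dBarred w ⟨i, Nat.lt_of_succ_lt h⟩) :=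
        fun ⟨h, _⟩ => absurd h (not_lt.mpr h1)
      have hne2 : ¬ (∃ h : i + 1 < n, (w ⟨i + 1, h⟩ : ℕ) < (w ⟨i, Nat.lt_of_succ_lt h⟩ : ℕ)) :=
        fun ⟨h, _⟩ => absurd h (not_lt.mpr h1)
      have hXi1 : X (i+1) = 0 := by rw [hXdef]; exact dif_neg (not_lt.mpr h1)
      have hlt := (w ⟨i, hi⟩).isLt
      have hXi : X i = 0 := by
        rw [show X i = (if i + 1 < (w ⟨i, hi⟩ : ℕ) then (1:ℤ) else 0) from dif_pos hi,
          if_neg (by omega)]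
      rw [if_neg hne1, if_neg hne2, hXi1, hXi]
  have hsum : ((dDEXset w).card : ℤ) - (dDes w : ℤ) = X n - X 0 := by
    rw [dDEXset, dDes, Finset.card_filter, Finset.card_filter]
    push_cast
    rw [← Finset.sum_sub_distrib, Finset.sum_congr rfl key, Finset.sum_range_sub X n]
  have hXn : X n = 0 := by rw [hXdef]; exact dif_neg (lt_irrefl n)
  have hX0 : X 0 = if 0 + 1 < (w ⟨0, hn⟩ : ℕ) then 1 else 0 := by rw [hXdef]; exact dif_pos hn
  constructor
  · intro hle
    have hx : X 0 = 0 := by rw [hX0, if_neg (by omega)]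
    rw [hXn, hx] at hsum
    omega
  · intro hgt
    have hx : X 0 = 1 := by rw [hX0, if_pos (by omega)]
    rw [hXn, hx] at hsum
    omega
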